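/- If Condition (dual certificate) holds for a solution x̂ of the basis pursuit analysis problem (minimize ‖Ψᵀx‖₁ subject to Φx = b), then x̂ is the unique solution. Specifically: if Ker(Ψᵀ_J) ∩ Ker(Φ) = {0} and there exists y ∈ ℝˡ with Ψy ∈ Im(Φᵀ), y_I = sign(Ψᵀ_I x̂), and ‖y_J‖_∞ < 1, then for every h ∈ Ker(Φ)\{0}, ‖Ψᵀ(x̂+h)‖₁ > ‖Ψᵀx̂‖₁. -/

import Mathlib

open Matrix

/-- ℓ₁ norm of a finite real vector. -/
noncomputable def l1 {k : ℕ} (v : Fin k → ℝ) : ℝ := ∑ i, |v i|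

/-- ℓ₂ (Euclidean) norm of a finite real vector. -/
noncomputable def l2 {k : ℕ} (v : Fin k → ℝ) : ℝ := Real.sqrt (∑ i, (v i) ^ 2)

/-- ℓ₁ norm of the subvector indexed by `S`. -/
noncomputable def l1S {k : ℕ} (S : Finset (Fin k)) (v : Fin k → ℝ) : ℝ := ∑ i ∈ S, |v i|

/-- ℓ₂ norm of the subvector indexed by `S`. -/
noncomputable def l2S {k : ℕ} (S : Finset (Fin k)) (v : Fin k → ℝ) : ℝ :=
  Real.sqrt (∑ i ∈ S, (v i) ^ 2)

/-- ℓ∞ norm of the subvector indexed by `S` (0 if `S` is empty). -/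
noncomputable def linfS {k : ℕ} (S : Finset (Fin k)) (v : Fin k → ℝ) : ℝ := ⨆ i ∈ S, |v i|

/-- the dual certificate condition implies uniqueness for basis pursuit analysis. -/
theorem stmt0 {m n l : ℕ} (Φ : Matrix (Fin m) (Fin n) ℝ) (Ψ : Matrix (Fin n) (Fin l) ℝ)
    (b : Fin m → ℝ) (xh : Fin n → ℝ) (hfeas : Φ.mulVec xh = b)
    (hΦ : Φ.rank = m)
    (I : Finset (Fin l))
    (hI : I = Finset.univ.filter fun i => Ψ.transpose.mulVec xh i ≠ 0)
    (hker : ∀ h : Fin n → ℝ, (∀ i ∈ Iᶜ, Ψ.transpose.mulVec h i = 0) →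
      Φ.mulVec h = 0 → h = 0)
    (y : Fin l → ℝ)
    (hyIm : ∃ β : Fin m → ℝ, Ψ.mulVec y = Φ.transpose.mulVec β)
    (hyI : ∀ i ∈ I, y i = Real.sign (Ψ.transpose.mulVec xh i))
    (hyJ : ∀ i ∈ Iᶜ, |y i| < 1) :
    ∀ h : Fin n → ℝ, Φ.mulVec h = 0 → h ≠ 0 →
      l1 (Ψ.transpose.mulVec xh) < l1 (Ψ.transpose.mulVec (xh + h)) := by
  intro h hΦh hne
  obtain ⟨β, hβ⟩ := hyIm
  set u := Ψ.transpose.mulVec xh with hu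
  set v := Ψ.transpose.mulVec h with hv
  have huv : Ψ.transpose.mulVec (xh + h) = fun i => u i + v i := by
    rw [Matrix.mulVec_add]; rfl
  -- dot product is zero
  have hdot : ∑ i, y i * v i = 0 := by
    have : y ⬝ᵥ v = 0 := by
      rw [hv, Matrix.dotProduct_mulVec, Matrix.vecMul_transpose, hβ,
        Matrix.mulVec_transpose, ← Matrix.dotProduct_mulVec, hΦh, dotProduct_zero]
    simpa [dotProduct] using this
  -- on Iᶜ, u i = 0
  have huJ : ∀ i ∈ Iᶜ, u i = 0 := by
    intro i hi
    rw [Finset.mem_compl, hI, Finset.mem_filter] at hi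
    push_neg at hi
    exact hi (Finset.mem_univ i)
  -- per-index inequality on I
  have hIle : ∀ i ∈ I, |u i| + y i * v i ≤ |u i + v i| := by
    intro i hi
    rw [hyI i hi]
    rcases lt_trichotomy (u i) 0 with hlt | heq | hgt
    · rw [Real.sign_of_neg hlt, abs_of_neg hlt]
      have := neg_le_abs (u i + v i)
      linarith
    · rw [hI, Finset.mem_filter] at hi; exact absurd heq hi.2
    · rw [Real.sign_of_pos hgt, abs_of_pos hgt]
      have := le_abs_self (u i + v i)
      linarith
  -- exists i0 in Iᶜ with v i0 ≠ 0
  have hex : ∃ i0 ∈ Iᶜ, v i0 ≠ 0 := by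
    by_contra hc
    push_neg at hc
    exact hne (hker h (fun i hi => hc i hi) hΦh)
  obtain ⟨i0, hi0, hvi0⟩ := hex
  -- positivity of the J part
  have hterm : ∀ i ∈ Iᶜ, 0 ≤ |v i| - y i * v i := by
    intro i hi
    have h1 : y i * v i ≤ |y i| * |v i| := by
      calc y i * v i ≤ |y i * v i| := le_abs_self _
        _ = |y i| * |v i| := abs_mul _ _
    have h2 : |y i| * |v i| ≤ 1 * |v i| :=
      mul_le_mul_of_nonneg_right (le_of_lt (hyJ i hi)) (abs_nonneg _)
    linarith
  have hpos : 0 < ∑ i ∈ Iᶜ, (|v i| - y i * v i) := by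
    apply Finset.sum_pos' hterm
    refine ⟨i0, hi0, ?_⟩
    have h1 : y i0 * v i0 ≤ |y i0| * |v i0| := by
      calc y i0 * v i0 ≤ |y i0 * v i0| := le_abs_self _
        _ = |y i0| * |v i0| := abs_mul _ _
    have h2 : |y i0| * |v i0| < 1 * |v i0| :=
      mul_lt_mul_of_pos_right (hyJ i0 hi0) (abs_pos.2 hvi0)
    linarith
  -- split sums
  have hsplit : ∀ w : Fin l → ℝ, ∑ i, w i = ∑ i ∈ I, w i + ∑ i ∈ Iᶜ, w i := by
    intro w; rw [Finset.sum_add_sum_compl]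
  rw [huv]
  unfold l1
  rw [hsplit (fun i => |u i|), hsplit (fun i => |u i + v i|)]
  have e1 : ∑ i ∈ Iᶜ, |u i| = 0 :=
    Finset.sum_eq_zero fun i hi => by rw [huJ i hi, abs_zero]
  have e2 : ∑ i ∈ Iᶜ, |u i + v i| = ∑ i ∈ Iᶜ, |v i| :=
    Finset.sum_congr rfl fun i hi => by rw [huJ i hi, zero_add]
  have e3 : ∑ i ∈ I, y i * v i = - ∑ i ∈ Iᶜ, y i * v i := by
    have := hsplit (fun i => y i * v i)
    rw [hdot] at this
    linarith
  have e4 : ∑ i ∈ I, (|u i| + y i * v i) ≤ ∑ i ∈ I, |u i + v i| :=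
    Finset.sum_le_sum hIle
  rw [Finset.sum_add_distrib] at e4
  have e5 : ∑ i ∈ Iᶜ, (|v i| - y i * v i) =
      ∑ i ∈ Iᶜ, |v i| - ∑ i ∈ Iᶜ, y i * v i := Finset.sum_sub_distrib _ _
  rw [e5] at hpos
  rw [e1, e2]
  linarith [e3, e4, hpos]
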